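/- For the Tribonacci sequence and any k ≥ 5: 8·∑_{j=0}^{k} j·T(j)² = (9k−2)·T(k)² + 7(k−1)·T(k−1)² + 4(k−2)·T(k−2)² − 2k·T(k−3)² − k·T(k−4)² − (k−1)·T(k−5)² + 4. -/

import Mathlib

open Finset

theorem stmt18 (T : ℕ → ℤ) (h0 : T 0 = 0) (h1 : T 1 = 1) (h2 : T 2 = 1) (hT : ∀ n, 3 ≤ n → T n = T (n-1) + T (n-2) + T (n-3)) :
    ∀ k, 5 ≤ k → 8*∑ j ∈ range (k+1), (j:ℤ)*(T j)^2 = (9*(k:ℤ)-2)*(T k)^2 + 7*((k:ℤ)-1)*(T (k-1))^2 + 4*((k:ℤ)-2)*(T (k-2))^2 - 2*(k:ℤ)*(T (k-3))^2 - (k:ℤ)*(T (k-4))^2 - ((k:ℤ)-1)*(T (k-5))^2 + 4 := by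
  have h3 : T 3 = 2 := by rw [hT 3 (by norm_num)]; simp [h0, h1, h2]
  have h4 : T 4 = 4 := by rw [hT 4 (by norm_num)]; norm_num [h1, h2, h3]
  have h5 : T 5 = 7 := by rw [hT 5 (by norm_num)]; simp [h2, h3, h4]
  intro k hk
  induction k, hk using Nat.le_induction with
  | base =>
    simp [Finset.sum_range_succ, h0, h1, h2, h3, h4, h5]
  | succ n hn ih =>
    rw [Finset.sum_range_succ, mul_add]
    rw [ih]
    have e1 : n + 1 - 1 = n := by omega
    have e2 : n + 1 - 2 = n - 1 := by omega
    have e3 : n + 1 - 3 = n - 2 := by omega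
    have e4 : n + 1 - 4 = n - 3 := by omega
    have e5 : n + 1 - 5 = n - 4 := by omega
    rw [e1, e2, e3, e4, e5]
    have hg : T (n+1) = T (n-2) + T (n-1) + T n := by
      rw [hT (n+1) (by omega), e1, e2, e3]; ring
    have hf : T n = T (n-3) + T (n-2) + T (n-1) := by
      rw [hT n (by omega)]; ring
    have he : T (n-1) = T (n-4) + T (n-3) + T (n-2) := by
      have a1 : n-1-1 = n-2 := by omega
      have a2 : n-1-2 = n-3 := by omega
      have a3 : n-1-3 = n-4 := by omega
      rw [hT (n-1) (by omega), a1, a2, a3]; ring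
    have hd : T (n-2) = T (n-5) + T (n-4) + T (n-3) := by
      have a1 : n-2-1 = n-3 := by omega
      have a2 : n-2-2 = n-4 := by omega
      have a3 : n-2-3 = n-5 := by omega
      rw [hT (n-2) (by omega), a1, a2, a3]; ring
    -- key identity
    have key : (T (n+1))^2 = 2*(T n)^2 + 3*(T (n-1))^2 + 6*(T (n-2))^2
        - (T (n-3))^2 - (T (n-5))^2 := by
      rw [hg, hf, he, hd]; ring
    push_cast
    linear_combination (1 - (n:ℤ)) * key
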